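/- Let φ, ψ be real numbers with 0 < φ < π, and set r = cos(φ/2 + ψ)/cos(φ/2), R = 1/(2·cos(φ/2)) and c = R·e^{−iφ/2}. Then |0 − c| = |1 − c| = |e^{−iφ} − c| = |r·e^{iψ} − c| = R, so the four points 0, 1, e^{−iφ} and r·e^{iψ} lie on the circle with centre c and radius R. Moreover 1 − c ≠ 0 and (e^{iφ} − 1)/(1 − c) = 2i·sin(φ), a purely imaginary number; hence the line through 1 and e^{iφ} is tangent to this circle at the point 1. -/

import Mathlib

/-- For `0 < φ < π`, with `r = cos(φ/2 + ψ)/cos(φ/2)`, `R = 1/(2cos(φ/2))` and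
`c = R·e^{−iφ/2}`: the points `0, 1, e^{−iφ}, r·e^{iψ}` lie on the circle of centre `c`
and radius `R`; moreover `1 − c ≠ 0` and `(e^{iφ} − 1)/(1 − c) = 2i·sin φ` is purely
imaginary, so the line through `1` and `e^{iφ}` is tangent to this circle at `1`. -/
theorem stmt_13 (φ ψ : ℝ) (h1 : 0 < φ) (h2 : φ < Real.pi) :
    let r : ℝ := Real.cos (φ / 2 + ψ) / Real.cos (φ / 2)
    let R : ℝ := 1 / (2 * Real.cos (φ / 2))
    let c : ℂ := (R : ℂ) * Complex.exp (-(Complex.I * ((φ : ℂ) / 2)))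
    ‖0 - c‖ = R ∧
    ‖1 - c‖ = R ∧
    ‖Complex.exp (-(Complex.I * (φ : ℂ))) - c‖ = R ∧
    ‖(r : ℂ) * Complex.exp (Complex.I * (ψ : ℂ)) - c‖ = R ∧
    (1 : ℂ) - c ≠ 0 ∧
    (Complex.exp (Complex.I * (φ : ℂ)) - 1) / (1 - c) =
      2 * Complex.I * (Real.sin φ : ℂ) := by
  intro r R c
  have hc : 0 < Real.cos (φ / 2) := by
    apply Real.cos_pos_of_mem_Ioo
    constructor <;> [linarith [Real.pi_pos]; linarith]
  have hR : 0 < R := by positivity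
  have hpyth := Real.sin_sq_add_cos_sq (φ / 2)
  have habs : ∀ z : ℂ, Complex.normSq z = R ^ 2 → ‖z‖ = R := by
    intro z h
    rw [Complex.norm_def, h, Real.sqrt_sq hR.le]
  have h0 : ‖0 - c‖ = R := by
    simp [c, norm_mul, Complex.norm_exp, Complex.norm_real, abs_of_pos hR]
  have hone : ‖1 - c‖ = R := by
    apply habs
    simp [c, Complex.normSq_apply, Complex.exp_re, Complex.exp_im]
    have hRdef : 2 * R * Real.cos (φ / 2) = 1 := by
      simp only [R]; field_simp
    nlinarith [hpyth, hRdef]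
  have hexp : ‖Complex.exp (-(Complex.I * (φ : ℂ))) - c‖ = R := by
    apply habs
    simp [c, Complex.normSq_apply, Complex.exp_re, Complex.exp_im]
    have hRdef : 2 * R * Real.cos (φ / 2) = 1 := by simp only [R]; field_simp
    have hsub : Real.cos φ * Real.cos (φ / 2) + Real.sin φ * Real.sin (φ / 2)
        = Real.cos (φ / 2) := by
      rw [← Real.cos_sub]; ring_nf
    nlinarith [hpyth, hRdef, Real.sin_sq_add_cos_sq φ, hsub]
  have hr : ‖(r : ℂ) * Complex.exp (Complex.I * (ψ : ℂ)) - c‖ = R := by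
    apply habs
    simp [c, Complex.normSq_apply, Complex.exp_re, Complex.exp_im]
    have hrdef : r * Real.cos (φ / 2) = Real.cos (φ / 2 + ψ) := by
      simp only [r]; field_simp
    have hRdef : 2 * R * Real.cos (φ / 2) = 1 := by simp only [R]; field_simp
    have hadd := Real.cos_add (φ / 2) ψ
    have key : r * r = 2 * R * r * Real.cos (φ / 2 + ψ) := by
      simp only [r, R]; field_simp
    clear_value c R r
    linear_combination (r^2) * Real.sin_sq_add_cos_sq ψ + (R^2) * hpyth
      + 2 * r * R * hadd + key
  have hne : (1 : ℂ) - c ≠ 0 := by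
    intro h
    rw [h] at hone
    simp at hone
    exact hR.ne' hone.symm
  refine ⟨h0, hone, hexp, hr, hne, ?_⟩
  rw [div_eq_iff hne]
  have hs2 : Real.sin φ = 2 * Real.sin (φ / 2) * Real.cos (φ / 2) := by
    rw [show φ = 2 * (φ / 2) by ring, Real.sin_two_mul]; ring_nf
  have hc2 : Real.cos φ = 1 - 2 * Real.sin (φ / 2) ^ 2 := by
    have h := Real.cos_two_mul' (φ / 2)
    rw [show 2 * (φ / 2) = φ by ring] at h
    linarith [hpyth]
  apply Complex.ext
  · simp [c, Complex.exp_re, Complex.exp_im, Complex.mul_re, Complex.mul_im,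
      Complex.sin_ofReal_re, Complex.sin_ofReal_im, Complex.cos_ofReal_re]
    simp only [R]; field_simp
    rw [hc2, hs2]; ring
  · simp [c, Complex.exp_re, Complex.exp_im, Complex.mul_re, Complex.mul_im,
      Complex.sin_ofReal_re, Complex.sin_ofReal_im, Complex.cos_ofReal_re]
    simp only [R]; field_simp
    rw [hs2]; ring
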